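/- The log-Hadamard representation := H^{⊗(2k+1)}·cexp(h(A))·H^{⊗(2k+1)} (with cexp(h(A)) = I_{N²} ⊕ exp(h(A)), N = 2^k) defines an injective group homomorphism from the additive group of N×N symmetric ℤ₂-matrices to the unitary group U(2N²): (Â·B̂ = widehat(A +₂ B) = B̂·Â, widehat(0) = I, and A ≠ B implies ≠ B̂). -/

import Mathlib

open Matrix Kronecker

/-- Vertices of a graph with N = 2^k nodes, encoded as bitstrings of k qubits. -/
abbrev Vtx (k : ℕ) := Fin k → Fin 2

/-- The 2×2 Hadamard matrix. -/
noncomputable def H2 : Matrix (Fin 2) (Fin 2) ℂ :=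
  ((Real.sqrt 2 : ℂ))⁻¹ • !![1, 1; 1, -1]

/-- h(A) = iπ·∑_{i,j} A_{ij} |i,j⟩⟨i,j|. -/
noncomputable def hmat {k : ℕ} (A : Matrix (Vtx k) (Vtx k) (ZMod 2)) :
    Matrix (Vtx k × Vtx k) (Vtx k × Vtx k) ℂ :=
  Matrix.diagonal fun p => Complex.I * (Real.pi : ℂ) * ((A p.1 p.2).val : ℂ)

/-- cexp(K) = I ⊕ exp(K) = |0⟩⟨0|⊗I + |1⟩⟨1|⊗exp(K). -/
noncomputable def cexpM {k : ℕ} (K : Matrix (Vtx k × Vtx k) (Vtx k × Vtx k) ℂ) :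
    Matrix (Fin 2 × (Vtx k × Vtx k)) (Fin 2 × (Vtx k × Vtx k)) ℂ :=
  (Matrix.single 0 0 1) ⊗ₖ (1 : Matrix (Vtx k × Vtx k) (Vtx k × Vtx k) ℂ)
    + (Matrix.single 1 1 1) ⊗ₖ NormedSpace.exp K

/-- The Hadamard transform H^{⊗(2k+1)} on the (2k+1)-qubit space
ℂ² ⊗ (ℂ^{2^k} ⊗ ℂ^{2^k}), given by its entrywise tensor-power formula. -/
noncomputable def Hfull (k : ℕ) :
    Matrix (Fin 2 × (Vtx k × Vtx k)) (Fin 2 × (Vtx k × Vtx k)) ℂ :=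
  Matrix.of fun p q =>
    H2 p.1 q.1 * (∏ t, H2 (p.2.1 t) (q.2.1 t)) * ∏ t, H2 (p.2.2 t) (q.2.2 t)

/-- The log-Hadamard representation Â = H^{⊗(2k+1)}·cexp(h(A))·H^{⊗(2k+1)}. -/
noncomputable def hatRep {k : ℕ} (A : Matrix (Vtx k) (Vtx k) (ZMod 2)) :
    Matrix (Fin 2 × (Vtx k × Vtx k)) (Fin 2 × (Vtx k × Vtx k)) ℂ :=
  Hfull k * cexpM (hmat A) * Hfull k

/-! ### Auxiliary lemmas -/

noncomputable def HK (k : ℕ) : Matrix (Vtx k) (Vtx k) ℂ :=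
  Matrix.of fun u v => ∏ t, H2 (u t) (v t)

lemma H2_mul_H2 : H2 * H2 = 1 := by
  have h2 : ((Real.sqrt 2 : ℂ))⁻¹ * ((Real.sqrt 2 : ℂ))⁻¹ = 2⁻¹ := by
    rw [← mul_inv, ← Complex.ofReal_mul, Real.mul_self_sqrt (by norm_num)]
    norm_num
  ext i j
  fin_cases i <;> fin_cases j <;>
    simp [H2, Matrix.mul_apply, Fin.sum_univ_two, Matrix.one_apply] <;>
    ring_nf <;>
    rw [show ((Real.sqrt 2 : ℂ))⁻¹ ^ 2 = 2⁻¹ by rw [sq]; exact h2] <;> norm_num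

lemma HK_mul_HK (k : ℕ) : HK k * HK k = 1 := by
  ext u w
  rw [Matrix.mul_apply]
  have : ∀ v : Vtx k, HK k u v * HK k v w = ∏ t, (H2 (u t) (v t) * H2 (v t) (w t)) := by
    intro v; simp [HK, Finset.prod_mul_distrib]
  simp_rw [this]
  rw [← Fintype.piFinset_univ, ← Finset.prod_univ_sum (fun _ => Finset.univ)
    (fun t x => H2 (u t) x * H2 x (w t))]
  have hx : ∀ t, (∑ x : Fin 2, H2 (u t) x * H2 x (w t)) = (1 : Matrix (Fin 2) (Fin 2) ℂ) (u t) (w t) := by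
    intro t; rw [← Matrix.mul_apply, H2_mul_H2]
  simp_rw [hx, Matrix.one_apply]
  by_cases h : u = w
  · subst h; simp
  · rw [if_neg h]
    obtain ⟨t, ht⟩ := Function.ne_iff.mp h
    exact Finset.prod_eq_zero (Finset.mem_univ t) (by rw [if_neg ht])

lemma Hfull_eq (k : ℕ) : Hfull k = H2 ⊗ₖ (HK k ⊗ₖ HK k) := by
  ext ⟨a, u⟩ ⟨b, v⟩
  simp [Hfull, HK, Matrix.kroneckerMap_apply, mul_assoc]

lemma Hfull_mul_Hfull (k : ℕ) : Hfull k * Hfull k = 1 := by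
  rw [Hfull_eq, ← Matrix.mul_kronecker_mul, ← Matrix.mul_kronecker_mul,
    H2_mul_H2, HK_mul_HK, Matrix.one_kronecker_one, Matrix.one_kronecker_one]

noncomputable def DM {k : ℕ} (A : Matrix (Vtx k) (Vtx k) (ZMod 2)) :
    Matrix (Fin 2 × (Vtx k × Vtx k)) (Fin 2 × (Vtx k × Vtx k)) ℂ :=
  Matrix.diagonal fun q => if q.1 = 0 then 1 else (-1 : ℂ) ^ (A q.2.1 q.2.2).val

lemma cexpM_hmat {k : ℕ} (A : Matrix (Vtx k) (Vtx k) (ZMod 2)) :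
    cexpM (hmat A) = DM A := by
  have hexp : NormedSpace.exp (hmat A)
      = Matrix.diagonal fun p : Vtx k × Vtx k => (-1 : ℂ) ^ (A p.1 p.2).val := by
    rw [hmat, Matrix.exp_diagonal]
    refine congrArg Matrix.diagonal ?_
    rw [Pi.exp_def]
    funext p
    rw [← Complex.exp_eq_exp_ℂ]
    rw [show Complex.I * (Real.pi : ℂ) * ((A p.1 p.2).val : ℂ)
        = ((A p.1 p.2).val : ℕ) * ((Real.pi : ℂ) * Complex.I) by ring]
    rw [Complex.exp_nat_mul, Complex.exp_pi_mul_I]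
  rw [cexpM, hexp, DM]
  ext ⟨a, p⟩ ⟨b, q⟩
  fin_cases a <;> fin_cases b <;>
    simp [Matrix.kroneckerMap_apply, Matrix.single, Matrix.diagonal,
      Matrix.one_apply, Prod.ext_iff]

lemma neg_one_pow_val_add (a b : ZMod 2) :
    (-1 : ℂ) ^ (a + b).val = (-1 : ℂ) ^ a.val * (-1 : ℂ) ^ b.val := by
  rw [← pow_add, ZMod.val_add, ← neg_one_pow_eq_pow_mod_two]

lemma DM_mul {k : ℕ} (A B : Matrix (Vtx k) (Vtx k) (ZMod 2)) :
    DM A * DM B = DM (A + B) := by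
  rw [DM, DM, DM, Matrix.diagonal_mul_diagonal]
  refine congrArg Matrix.diagonal ?_
  funext ⟨a, p⟩
  fin_cases a <;> simp [neg_one_pow_val_add]

lemma DM_zero {k : ℕ} : DM (0 : Matrix (Vtx k) (Vtx k) (ZMod 2)) = 1 := by
  rw [DM]
  convert Matrix.diagonal_one
  simp

lemma hatRep_eq {k : ℕ} (A : Matrix (Vtx k) (Vtx k) (ZMod 2)) :
    hatRep A = Hfull k * DM A * Hfull k := by
  rw [hatRep, cexpM_hmat]

lemma DM_inj {k : ℕ} {A B : Matrix (Vtx k) (Vtx k) (ZMod 2)} (h : DM A = DM B) :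
    A = B := by
  ext i j
  have := congrFun (congrFun h (1, (i, j))) (1, (i, j))
  simp only [DM, Matrix.diagonal_apply_eq] at this
  norm_num at this
  apply ZMod.val_injective 2
  have ha := (A i j).val_lt
  have hb := (B i j).val_lt
  interval_cases h1 : (A i j).val <;> interval_cases h2 : (B i j).val <;>
    simp_all <;> norm_num at this

/-- The log-Hadamard representation is an injective group homomorphism from the
additive group of N×N symmetric ℤ₂-matrices (N = 2^k) to the unitary group:
widehat(A +₂ B) = Â·B̂ = B̂·Â, widehat(0) = I, and A ≠ B implies Â ≠ B̂. -/
theorem stmt_8 {k : ℕ} :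
    (∀ A B : Matrix (Vtx k) (Vtx k) (ZMod 2), A.IsSymm → B.IsSymm →
      hatRep (A + B) = hatRep A * hatRep B ∧
      hatRep A * hatRep B = hatRep B * hatRep A) ∧
    hatRep (0 : Matrix (Vtx k) (Vtx k) (ZMod 2)) = 1 ∧
    (∀ A B : Matrix (Vtx k) (Vtx k) (ZMod 2), A.IsSymm → B.IsSymm →
      A ≠ B → hatRep A ≠ hatRep B) := by
  have key : ∀ A B : Matrix (Vtx k) (Vtx k) (ZMod 2),
      hatRep A * hatRep B = hatRep (A + B) := by
    intro A B
    rw [hatRep_eq, hatRep_eq, hatRep_eq]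
    calc Hfull k * DM A * Hfull k * (Hfull k * DM B * Hfull k)
        = Hfull k * DM A * (Hfull k * Hfull k) * DM B * Hfull k := by
          noncomm_ring
      _ = Hfull k * (DM A * DM B) * Hfull k := by
          rw [Hfull_mul_Hfull]; noncomm_ring
      _ = Hfull k * DM (A + B) * Hfull k := by rw [DM_mul]
  refine ⟨fun A B _ _ => ⟨(key A B).symm, ?_⟩, ?_, fun A B _ _ hne h => ?_⟩
  · rw [key, key, add_comm]
  · rw [hatRep_eq, DM_zero, mul_one, Hfull_mul_Hfull]
  · apply hne
    apply DM_inj (A := A) (B := B)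
    have h2 : Hfull k * hatRep A * Hfull k = Hfull k * hatRep B * Hfull k := by rw [h]
    rw [hatRep_eq, hatRep_eq] at h2
    calc DM A = (Hfull k * Hfull k) * DM A * (Hfull k * Hfull k) := by
          rw [Hfull_mul_Hfull]; noncomm_ring
      _ = Hfull k * (Hfull k * DM A * Hfull k) * Hfull k := by noncomm_ring
      _ = Hfull k * (Hfull k * DM B * Hfull k) * Hfull k := by rw [h2]
      _ = (Hfull k * Hfull k) * DM B * (Hfull k * Hfull k) := by noncomm_ring
      _ = DM B := by rw [Hfull_mul_Hfull]; noncomm_ring
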